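/- If a parametric function f : X × ℝ^m → ℝ^c is weight disentangled with respect to task vectors τ_1,…,τ_T and pairwise disjoint supports D_1,…,D_T, then f satisfies the task arithmetic property around θ0 with respect to {τ_t} and {D_t} with admissible coefficient set 𝒜 = ℝ^T; that is, for every (α_1,…,α_T) ∈ ℝ^T, f(x; θ0 + ∑_t α_t τ_t) = f(x; θ0 + α_t τ_t) whenever x ∈ D_t, and f(x; θ0 + ∑_t α_t τ_t) = f(x; θ0) whenever x ∉ ⋃_t D_t. -/
import Mathlib

/-- If `f` is weight disentangled w.r.t. task vectors `τ t` and pairwise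
disjoint supports `D t`, then `f` satisfies the task arithmetic property around `θ0`
w.r.t. `{τ t}` and `{D t}` with admissible coefficient set `𝒜 = ℝ^T`. -/
theorem weight_disentanglement_implies_task_arithmetic
    {X : Type*} {m c T : ℕ}
    (f : X → (Fin m → ℝ) → (Fin c → ℝ))
    (θ0 : Fin m → ℝ) (τ : Fin T → (Fin m → ℝ)) (D : Fin T → Set X)
    (hdisj : ∀ t t' : Fin T, t ≠ t' → Disjoint (D t) (D t'))
    (hWD : ∃ (g : Fin T → X → (Fin m → ℝ) → (Fin c → ℝ)) (g0 : X → (Fin c → ℝ)),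
      (∀ α : Fin T → ℝ, ∀ x : X,
        f x (θ0 + ∑ t, α t • τ t) = (∑ t, g t x (α t • τ t)) + g0 x) ∧
      (∀ t : Fin T, ∀ x ∉ D t, ∀ α : ℝ, g t x (α • τ t) = 0) ∧
      (∀ x ∈ ⋃ t, D t, g0 x = 0)) :
    (∀ α : Fin T → ℝ, ∀ t : Fin T, ∀ x ∈ D t,
      f x (θ0 + ∑ t', α t' • τ t') = f x (θ0 + α t • τ t)) ∧
    (∀ α : Fin T → ℝ, ∀ x ∉ ⋃ t, D t,
      f x (θ0 + ∑ t', α t' • τ t') = f x θ0) := by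
  obtain ⟨g, g0, hsum, hgz, hg0⟩ := hWD
  constructor
  · intro α t x hx
    have hnot : ∀ t' : Fin T, t' ≠ t → x ∉ D t' := by
      intro t' hne hx'
      exact Set.disjoint_left.mp (hdisj t' t hne) hx' hx
    set β : Fin T → ℝ := fun t' => if t' = t then α t else 0 with hβ
    have hβsum : (∑ t', β t' • τ t') = α t • τ t := by
      rw [Finset.sum_eq_single t]
      · simp [hβ]
      · intro b _ hb; simp [hβ, hb]
      · simp
    have h1 := hsum α x
    have h2 := hsum β x
    rw [hβsum] at h2
    rw [h1, h2]
    have hg0x : g0 x = 0 := hg0 x (Set.mem_iUnion.mpr ⟨t, hx⟩)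
    rw [hg0x]
    congr 1
    rw [Finset.sum_eq_single t, Finset.sum_eq_single t]
    · simp [hβ]
    · intro b _ hb; exact hgz b x (hnot b hb) (β b)
    · simp
    · intro b _ hb; exact hgz b x (hnot b hb) (α b)
    · simp
  · intro α x hx
    have hnot : ∀ t : Fin T, x ∉ D t := fun t h => hx (Set.mem_iUnion.mpr ⟨t, h⟩)
    have h1 := hsum α x
    have h2 := hsum 0 x
    simp only [Pi.zero_apply, zero_smul, Finset.sum_const_zero, add_zero] at h2
    rw [h1, h2]
    have e1 : (∑ t, g t x (α t • τ t)) = 0 := by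
      rw [Finset.sum_congr rfl fun t _ => hgz t x (hnot t) (α t)]; simp
    have e2 : (∑ t, g t x 0) = 0 := by
      rw [Finset.sum_congr rfl fun t _ => (by simpa using hgz t x (hnot t) 0 : g t x 0 = 0)]; simp
    rw [e1, e2]
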